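/- Let a, b be reals with 1 ≥ a > b ≥ a² > 0. Define g(a,b,0) = 1 and g(a,b,i) = ∏_{j=0}^{i−1} (a(a−b)+j(b−a²))/((a−b)+j(b−a²)) for 1 ≤ i ≤ d. Then for every s with 0 ≤ s ≤ d, the alternating binomial sum Σ_{i=s}^{d} C(d−s, i−s)(−1)^{i−s} g(a,b,i) is strictly positive. -/

import Mathlib

theorem key_sum (D c : ℝ) (hc : 0 ≤ c) : ∀ n : ℕ, ∀ E : ℝ, 0 < E →
    ∑ k ∈ Finset.range (n+1), (n.choose k : ℝ) * (-1)^k *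
      ∏ j ∈ Finset.range k, (E + j*c - D)/(E + j*c)
    = ∏ k ∈ Finset.range n, (D + k*c)/(E + k*c) := by
  intro n
  induction n with
  | zero => intro E hE; simp
  | succ n ih =>
    intro E hE
    have hEc : (0:ℝ) < E + c := by linarith
    have hE0 : E ≠ 0 := ne_of_gt hE
    -- product shift lemma
    have hP : ∀ k : ℕ, (∏ j ∈ Finset.range (k+1), (E + (j:ℝ)*c - D)/(E + (j:ℝ)*c))
        = (E - D)/E * ∏ j ∈ Finset.range k, ((E+c) + (j:ℝ)*c - D)/((E+c) + (j:ℝ)*c) := by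
      intro k
      rw [Finset.prod_range_succ']
      have : ∀ j ∈ Finset.range k,
          (E + ((j:ℕ)+1:ℕ)*c - D)/(E + ((j:ℕ)+1:ℕ)*c)
          = ((E+c) + (j:ℝ)*c - D)/((E+c) + (j:ℝ)*c) := by
        intro j _
        push_cast
        ring_nf
      rw [Finset.prod_congr rfl this]
      push_cast
      ring
    -- split the sum
    have hsplit :
        ∑ k ∈ Finset.range (n+2), ((n+1).choose k : ℝ) * (-1)^k *
          ∏ j ∈ Finset.range k, (E + (j:ℝ)*c - D)/(E + (j:ℝ)*c)
        = (∑ k ∈ Finset.range (n+1), (n.choose k : ℝ) * (-1)^k *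
            ∏ j ∈ Finset.range k, (E + (j:ℝ)*c - D)/(E + (j:ℝ)*c))
          - (E - D)/E * ∑ k ∈ Finset.range (n+1), (n.choose k : ℝ) * (-1)^k *
            ∏ j ∈ Finset.range k, ((E+c) + (j:ℝ)*c - D)/((E+c) + (j:ℝ)*c) := by
      rw [Finset.sum_range_succ' (fun k => ((n+1).choose k : ℝ) * (-1)^k *
          ∏ j ∈ Finset.range k, (E + (j:ℝ)*c - D)/(E + (j:ℝ)*c))]
      have hpascal : ∀ k ∈ Finset.range (n+1),
          ((n+1).choose (k+1) : ℝ) * (-1)^(k+1) *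
            ∏ j ∈ Finset.range (k+1), (E + (j:ℝ)*c - D)/(E + (j:ℝ)*c)
          = (n.choose (k+1) : ℝ) * (-1)^(k+1) *
              ∏ j ∈ Finset.range (k+1), (E + (j:ℝ)*c - D)/(E + (j:ℝ)*c)
            - (n.choose k : ℝ) * (-1)^k *
              ((E - D)/E * ∏ j ∈ Finset.range k, ((E+c) + (j:ℝ)*c - D)/((E+c) + (j:ℝ)*c)) := by
        intro k _
        rw [Nat.choose_succ_succ, ← hP k]
        push_cast
        ring
      rw [Finset.sum_congr rfl hpascal, Finset.sum_sub_distrib]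
      have h1 : (∑ k ∈ Finset.range (n+1), (n.choose (k+1) : ℝ) * (-1)^(k+1) *
            ∏ j ∈ Finset.range (k+1), (E + (j:ℝ)*c - D)/(E + (j:ℝ)*c))
          + ((n+1).choose 0 : ℝ) * (-1)^0 * ∏ j ∈ Finset.range 0, (E + (j:ℝ)*c - D)/(E + (j:ℝ)*c)
          = ∑ k ∈ Finset.range (n+2), (n.choose k : ℝ) * (-1)^k *
            ∏ j ∈ Finset.range k, (E + (j:ℝ)*c - D)/(E + (j:ℝ)*c) := by
        rw [Finset.sum_range_succ' (fun k => (n.choose k : ℝ) * (-1)^k *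
          ∏ j ∈ Finset.range k, (E + (j:ℝ)*c - D)/(E + (j:ℝ)*c))]
        norm_num
      have h2 : ∑ k ∈ Finset.range (n+2), (n.choose k : ℝ) * (-1)^k *
            ∏ j ∈ Finset.range k, (E + (j:ℝ)*c - D)/(E + (j:ℝ)*c)
          = ∑ k ∈ Finset.range (n+1), (n.choose k : ℝ) * (-1)^k *
            ∏ j ∈ Finset.range k, (E + (j:ℝ)*c - D)/(E + (j:ℝ)*c) := by
        rw [Finset.sum_range_succ]
        simp [Nat.choose_succ_self]
      have h6 : ∑ k ∈ Finset.range (n+1), (n.choose k : ℝ) * (-1)^k *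
            ((E - D)/E * ∏ j ∈ Finset.range k, ((E+c) + (j:ℝ)*c - D)/((E+c) + (j:ℝ)*c))
          = (E - D)/E * ∑ k ∈ Finset.range (n+1), (n.choose k : ℝ) * (-1)^k *
            ∏ j ∈ Finset.range k, ((E+c) + (j:ℝ)*c - D)/((E+c) + (j:ℝ)*c) := by
        rw [Finset.mul_sum]
        exact Finset.sum_congr rfl fun k _ => by ring
      linarith [h1, h2, h6]
    rw [show n+1+1 = n+2 from rfl] at *
    rw [hsplit, ih E hE, ih (E+c) hEc]
    -- algebra with products
    have hprodE : ∀ m : ℕ, (0:ℝ) < ∏ k ∈ Finset.range m, (E + (k:ℝ)*c) :=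
      fun m => Finset.prod_pos (fun k _ => by positivity)
    have hprodEc : ∀ m : ℕ, (0:ℝ) < ∏ k ∈ Finset.range m, ((E+c) + (k:ℝ)*c) :=
      fun m => Finset.prod_pos (fun k _ => by positivity)
    have hshiftden : (∏ k ∈ Finset.range (n+1), (E + (k:ℝ)*c))
        = E * ∏ k ∈ Finset.range n, ((E+c) + (k:ℝ)*c) := by
      rw [Finset.prod_range_succ']
      have : ∀ k ∈ Finset.range n, (E + ((k:ℕ)+1:ℕ)*c) = ((E+c) + (k:ℝ)*c) := by
        intro k _; push_cast; ring
      rw [Finset.prod_congr rfl this]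
      push_cast; ring
    rw [Finset.prod_div_distrib, Finset.prod_div_distrib, Finset.prod_div_distrib]
    rw [Finset.prod_range_succ (fun k => (D + (k:ℝ)*c)), Finset.prod_range_succ (fun k => (E + (k:ℝ)*c))]
    have h3 := hprodE n
    have h4 := hprodEc n
    have h5 : (0:ℝ) < E + n*c := by positivity
    have hsd2 : E * ∏ k ∈ Finset.range n, ((E+c) + (k:ℝ)*c)
        = (∏ k ∈ Finset.range n, (E + (k:ℝ)*c)) * (E + (n:ℝ)*c) := by
      rw [← hshiftden, Finset.prod_range_succ]
    field_simp
    simp only [show ∀ x : ℕ, (x:ℝ) * c = c * x from fun x => mul_comm _ _] at hsd2 ⊢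
    linear_combination (∏ x ∈ Finset.range n, (D + c * (x:ℝ))) * (E - D) * hsd2

/-- positivity of the alternating binomial sums of `g(a,b,i)`
under the condition `1 ≥ a > b ≥ a² > 0`. -/
theorem alternating_sum_g_positive (d : ℕ) (a b : ℝ)
    (h1 : a ≤ 1) (h2 : b < a) (h3 : a ^ 2 ≤ b) (h4 : 0 < a ^ 2)
    (g : ℕ → ℝ)
    (hg : ∀ i : ℕ, g i = ∏ j ∈ Finset.range i,
      (a * (a - b) + (j : ℝ) * (b - a ^ 2)) / ((a - b) + (j : ℝ) * (b - a ^ 2))) :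
    ∀ s ≤ d, 0 < ∑ i ∈ Finset.Icc s d,
      ((d - s).choose (i - s) : ℝ) * (-1) ^ (i - s) * g i := by
  intro s hs
  set c : ℝ := b - a ^ 2 with hcdef
  have ha : 0 < a := by nlinarith
  have ha1 : a < 1 := by nlinarith
  have hab : 0 < a - b := by linarith
  have hc : 0 ≤ c := by simp [hcdef]; linarith
  set D : ℝ := (1 - a) * (a - b) with hDdef
  have hD : 0 < D := mul_pos (by linarith) hab
  set E : ℝ := (a - b) + (s:ℝ) * c with hEdef
  have hE : 0 < E := by have := mul_nonneg (Nat.cast_nonneg s : (0:ℝ) ≤ s) hc; linarith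
  have hden : ∀ j : ℕ, 0 < (a - b) + (j:ℝ) * c := fun j => by have := mul_nonneg (Nat.cast_nonneg j : (0:ℝ) ≤ j) hc; linarith
  have hnum : ∀ j : ℕ, 0 < a * (a - b) + (j:ℝ) * c := fun j => by have := mul_nonneg (Nat.cast_nonneg j : (0:ℝ) ≤ j) hc; nlinarith
  have hgpos : ∀ i, 0 < g i := by
    intro i
    rw [hg i]
    exact Finset.prod_pos fun j _ => div_pos (hnum j) (hden j)
  -- rewrite g (s + k)
  have hgshift : ∀ k : ℕ, g (s + k) = g s *
      ∏ j ∈ Finset.range k, (E + (j:ℝ)*c - D)/(E + (j:ℝ)*c) := by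
    intro k
    rw [hg (s + k), hg s, Finset.prod_range_add]
    congr 1
    refine Finset.prod_congr rfl fun j _ => ?_
    rw [hEdef, hDdef, hcdef]
    push_cast
    congr 1 <;> ring
  -- rewrite the Icc sum as a range sum
  rw [← Finset.Ico_add_one_right_eq_Icc, Finset.sum_Ico_eq_sum_range]
  have hds : d + 1 - s = (d - s) + 1 := by omega
  rw [hds]
  have hterm : ∀ k ∈ Finset.range ((d - s) + 1),
      ((d - s).choose ((s + k) - s) : ℝ) * (-1) ^ ((s + k) - s) * g (s + k)
      = g s * ((((d-s)).choose k : ℝ) * (-1) ^ k *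
          ∏ j ∈ Finset.range k, (E + (j:ℝ)*c - D)/(E + (j:ℝ)*c)) := by
    intro k _
    rw [Nat.add_sub_cancel_left, hgshift k]
    ring
  rw [Finset.sum_congr rfl hterm, ← Finset.mul_sum, key_sum D c hc (d - s) E hE]
  exact mul_pos (hgpos s) (Finset.prod_pos fun k _ => div_pos (by positivity) (by positivity))
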